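/- arXiv:1810.00863 — 2 statements merged into one kernel-verified Lean document; each statement's English description precedes it below -/
import Mathlib

section
/- Let H be a self-adjoint operator on a separable complex Hilbert space, α ∈ (0,1], E > inf σ(|H|), and let φ(t) = e^{-itH}φ₀ solve the Schrödinger equation with unit-norm initial state φ₀ satisfying tr(|H|^{2α} |φ₀⟩⟨φ₀|) ≤ E^{2α}. If at time t the state φ(t) is at relative angle θ := arccos(Re⟨φ(0), φ(t)⟩) ∈ [0,π] from φ₀, then t ≥ ((2 − 2cos θ)/g_α²)^{1/(2α)} · (1/E). In particular, for α = 1/2, t ≥ ((1 − cos θ)/2) · (1/E). -/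
open scoped ENNReal NNReal
open MeasureTheory

noncomputable section

local notation "⟪" x ", " y "⟫" => @inner ℂ _ _ x y

/-- `ζ_α := (2α/(1-α))^{1-α} + 2(2α/(1-α))^{-α}` for `α ∈ (0,1)`, and `ζ₁ := 1`. -/
def zetaC (α : ℝ) : ℝ :=
  if α = 1 then 1 else (2 * α / (1 - α)) ^ (1 - α) + 2 * (2 * α / (1 - α)) ^ (-α)

/-- `g_α := ζ_α (1-α)^{(1-α)/2} α^{α/2}`. -/
def gC (α : ℝ) : ℝ := zetaC α * (1 - α) ^ ((1 - α) / 2) * α ^ (α / 2)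

/-- The `p`-th absolute spectral moment `∫ |s|^p dμ_x(s)` of the (vector-indexed) spectral
measure family `μ`; for the spectral measure of a self-adjoint operator `H` this is
`‖|H|^{p/2} x‖²` (possibly `∞`). -/
def specMoment {ℋ : Type*} [NormedAddCommGroup ℋ] [InnerProductSpace ℂ ℋ]
    (μ : ℋ → Measure ℝ) (p : ℝ) (x : ℋ) : ℝ≥0∞ :=
  ∫⁻ s, ENNReal.ofReal (|s| ^ p) ∂(μ x)

lemma gC_exp {α : ℝ} (ha : 0 < α) (ha1 : α < 1) :
    gC α = Real.exp (Real.log 2 * (1 - α) - Real.log α * (α / 2)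
      - Real.log (1 - α) * ((1 - α) / 2)) := by
  have hb : (0:ℝ) < 1 - α := by linarith
  have hβ : (0:ℝ) < 2 * α / (1 - α) := by positivity
  have hlog : Real.log (2 * α / (1 - α)) = Real.log 2 + Real.log α - Real.log (1 - α) := by
    rw [Real.log_div (by positivity) hb.ne', Real.log_mul two_ne_zero ha.ne']
  rw [gC, zetaC, if_neg (by linarith), Real.rpow_def_of_pos hβ, Real.rpow_def_of_pos hβ,
    Real.rpow_def_of_pos hb, Real.rpow_def_of_pos ha, hlog]
  set L2 := Real.log 2 with hL2
  set La := Real.log α with hLa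
  set Lb := Real.log (1 - α) with hLb
  have h2e : ∀ x : ℝ, 2 * Real.exp x = Real.exp (L2 + x) := fun x => by
    rw [Real.exp_add, Real.exp_log two_pos]
  rw [h2e, add_mul, add_mul, ← Real.exp_add, ← Real.exp_add, ← Real.exp_add, ← Real.exp_add]
  have hA : Real.exp La = α := Real.exp_log ha
  have hB : Real.exp Lb = 1 - α := Real.exp_log hb
  have e1 : (L2 + La - Lb) * (1 - α) + Lb * ((1 - α) / 2) + La * (α / 2)
      = La + (L2 * (1 - α) - La * (α / 2) - Lb * ((1 - α) / 2)) := by ring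
  have e2 : L2 + (L2 + La - Lb) * (-α) + Lb * ((1 - α) / 2) + La * (α / 2)
      = Lb + (L2 * (1 - α) - La * (α / 2) - Lb * ((1 - α) / 2)) := by ring
  rw [e1, e2, Real.exp_add, Real.exp_add, hA, hB]
  ring

lemma gC_one : gC 1 = 1 := by
  simp [gC, zetaC]

lemma gC_pos {α : ℝ} (ha : 0 < α) (ha1 : α ≤ 1) : 0 < gC α := by
  rcases eq_or_lt_of_le ha1 with rfl | hlt
  · rw [gC_one]; norm_num
  · rw [gC_exp ha hlt]; exact Real.exp_pos _

lemma gC_sq_ge {α : ℝ} (ha : 0 < α) (ha1 : α ≤ 1) : (2:ℝ) ^ (2 - 2*α) ≤ gC α ^ 2 := by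
  rcases eq_or_lt_of_le ha1 with rfl | hlt
  · rw [gC_one]; norm_num
  · have hb : (0:ℝ) < 1 - α := by linarith
    rw [gC_exp ha hlt, Real.rpow_def_of_pos two_pos, sq, ← Real.exp_add]
    apply Real.exp_le_exp.mpr
    have hLa : Real.log α ≤ 0 := Real.log_nonpos ha.le ha1
    have hLb : Real.log (1 - α) ≤ 0 := Real.log_nonpos hb.le (by linarith)
    nlinarith [ha.le, hb.le]

lemma two_sub_cos_le {α : ℝ} (ha : 0 < α) (ha1 : α ≤ 1) (y : ℝ) :
    2 - 2 * Real.cos y ≤ (2:ℝ) ^ (2 - 2*α) * |y| ^ (2*α) := by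
  rcases eq_or_ne y 0 with rfl | hy
  · simp [Real.zero_rpow (by positivity : (2*α) ≠ 0)]
  · have hy0 : 0 < |y| := abs_pos.mpr hy
    by_cases h2 : |y| ≤ 2
    · have key : 2 - 2 * Real.cos y ≤ |y| ^ (2*α) * |y| ^ (2 - 2*α) := by
        rw [← Real.rpow_add hy0, show (2*α) + (2 - 2*α) = (2:ℝ) by ring, Real.rpow_two, sq_abs]
        nlinarith [Real.one_sub_sq_div_two_le_cos (x := y)]
      calc 2 - 2 * Real.cos y ≤ |y| ^ (2*α) * |y| ^ (2 - 2*α) := key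
        _ ≤ |y| ^ (2*α) * (2:ℝ) ^ (2 - 2*α) := by
            exact mul_le_mul_of_nonneg_left
              (Real.rpow_le_rpow (abs_nonneg y) h2 (by linarith)) (by positivity)
        _ = (2:ℝ) ^ (2 - 2*α) * |y| ^ (2*α) := by ring
    · push_neg at h2
      have h4 : 2 - 2 * Real.cos y ≤ 4 := by nlinarith [Real.neg_one_le_cos y]
      have h4' : (4:ℝ) = (2:ℝ) ^ (2 - 2*α) * (2:ℝ) ^ (2*α) := by
        rw [← Real.rpow_add two_pos, show (2 - 2*α) + 2*α = (2:ℝ) by ring, Real.rpow_two]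
        norm_num
      calc 2 - 2 * Real.cos y ≤ 4 := h4
        _ = (2:ℝ) ^ (2 - 2*α) * (2:ℝ) ^ (2*α) := h4'
        _ ≤ (2:ℝ) ^ (2 - 2*α) * |y| ^ (2*α) := by
            exact mul_le_mul_of_nonneg_left
              (Real.rpow_le_rpow two_pos.le h2.le (by positivity)) (by positivity)

lemma gC_half : gC (1/2) = 2 := by
  rw [gC_exp (by norm_num) (by norm_num)]
  have h : Real.log ((1:ℝ)/2) = -Real.log 2 := by
    rw [one_div, Real.log_inv]
  have h2 : Real.log (1 - (1:ℝ)/2) = -Real.log 2 := by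
    rw [show (1:ℝ) - 1/2 = 2⁻¹ by norm_num, Real.log_inv]
  rw [h2, show (1:ℝ) - 1/2 = 1/2 by norm_num] at *
  rw [h]
  rw [show Real.log 2 * (1/2) - -Real.log 2 * ((1/2)/2) - -Real.log 2 * ((1/2)/2)
      = Real.log 2 by ring]
  exact Real.exp_log two_pos

/-- Quantum speed limit, closed systems, pure states.  `H` self-adjoint
(encoded by its unitary group `T t = e^{-itH}` and spectral measure family `μ`), `α ∈ (0,1]`,
`E > inf σ(|H|)`, and `φ₀` a unit vector with `tr(|H|^{2α}|φ₀⟩⟨φ₀|) = ∫|s|^{2α} dμ_{φ₀} ≤ E^{2α}`.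
If `φ(t) = T_t φ₀` is at relative angle `θ = arccos(Re⟪φ₀, φ(t)⟫) ∈ [0,π]` from `φ₀`,
then `t ≥ ((2−2cos θ)/g_α²)^{1/(2α)}·(1/E)`; for `α = 1/2`, `t ≥ ((1−cos θ)/2)·(1/E)`. -/
theorem statement6
    {ℋ : Type*} [NormedAddCommGroup ℋ] [InnerProductSpace ℂ ℋ] [CompleteSpace ℋ]
    [TopologicalSpace.SeparableSpace ℋ]
    (H : ℋ →ₗ.[ℂ] ℋ) (hHsa : IsSelfAdjoint H)
    (μ : ℋ → Measure ℝ)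
    (hμtot : ∀ x : ℋ, μ x Set.univ = ENNReal.ofReal (‖x‖ ^ 2))
    (hHdom : ∀ x : ℋ, x ∈ H.domain ↔ specMoment μ 2 x ≠ ∞)
    (hHval : ∀ x : H.domain, ⟪(x : ℋ), H x⟫ = ∫ s, (s : ℂ) ∂(μ x))
    (T : ℝ → ℋ →L[ℂ] ℋ)
    (hT0 : T 0 = ContinuousLinearMap.id ℂ ℋ)
    (hTadd : ∀ t s : ℝ, (T t).comp (T s) = T (t + s))
    (hTiso : ∀ (t : ℝ) (x : ℋ), ‖T t x‖ = ‖x‖)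
    (hμT : ∀ (x : ℋ) (t : ℝ), ⟪x, T t x⟫ = ∫ s, Complex.exp (-(Complex.I * t * s)) ∂(μ x))
    (α : ℝ) (hα : α ∈ Set.Ioc (0 : ℝ) 1)
    (En : ℝ) (hEn : ∃ x : ℋ, x ≠ 0 ∧ μ x {s : ℝ | |s| < En} ≠ 0)
    (φ₀ : ℋ) (hφ₀norm : ‖φ₀‖ = 1)
    (hφ₀E : specMoment μ (2 * α) φ₀ ≤ ENNReal.ofReal (En ^ (2 * α)))
    (t : ℝ) (ht : 0 ≤ t)
    (θ : ℝ) (hθ : θ = Real.arccos ((⟪φ₀, T t φ₀⟫).re)) :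
    t ≥ ((2 - 2 * Real.cos θ) / gC α ^ 2) ^ (1 / (2 * α)) * (1 / En) ∧
    (α = 1 / 2 → t ≥ (1 - Real.cos θ) / 2 * (1 / En)) := by
  obtain ⟨hα0, hα1⟩ := hα
  have hEnpos : 0 < En := by
    by_contra hEn'
    push_neg at hEn'
    obtain ⟨x, -, hx⟩ := hEn
    apply hx
    have hempty : {s : ℝ | |s| < En} = ∅ := by
      ext s
      simp only [Set.mem_setOf_eq, Set.mem_empty_iff_false, iff_false, not_lt]
      exact le_trans hEn' (abs_nonneg s)
    rw [hempty, measure_empty]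
  haveI : IsProbabilityMeasure (μ φ₀) := ⟨by rw [hμtot, hφ₀norm]; norm_num⟩
  set r : ℝ := (⟪φ₀, T t φ₀⟫).re with hr
  have hr_le : |r| ≤ 1 := by
    calc |r| ≤ ‖⟪φ₀, T t φ₀⟫‖ := Complex.abs_re_le_norm _
      _ = ‖⟪φ₀, T t φ₀⟫‖ := rfl
      _ ≤ ‖φ₀‖ * ‖T t φ₀‖ := norm_inner_le_norm _ _
      _ = 1 := by rw [hTiso, hφ₀norm]; norm_num
  have hcont : Continuous fun s : ℝ => Complex.exp (-(Complex.I * (t:ℂ) * (s:ℂ))) := by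
    fun_prop
  have hint : Integrable (fun s : ℝ => Complex.exp (-(Complex.I * (t:ℂ) * (s:ℂ)))) (μ φ₀) := by
    apply Integrable.mono' (integrable_const (1:ℝ)) hcont.aestronglyMeasurable
    filter_upwards with s
    rw [Complex.norm_exp]
    simp
  have hre_exp : ∀ s : ℝ, (Complex.exp (-(Complex.I * (t:ℂ) * (s:ℂ)))).re = Real.cos (t * s) := by
    intro s
    rw [show -(Complex.I * (t:ℂ) * (s:ℂ)) = ((-(t*s) : ℝ) : ℂ) * Complex.I by push_cast; ring,
      Complex.exp_ofReal_mul_I_re, Real.cos_neg]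
  have hre : r = ∫ s, Real.cos (t * s) ∂(μ φ₀) := by
    have h1 := integral_re (μ := μ φ₀) hint
    simp only [RCLike.re_to_complex] at h1
    rw [hr, hμT φ₀ t, ← h1]
    exact integral_congr_ae (ae_of_all (μ φ₀) fun s => hre_exp s)
  have hcos_cont : Continuous fun s : ℝ => Real.cos (t * s) :=
    Real.continuous_cos.comp (continuous_const.mul continuous_id)
  have hcosI : Integrable (fun s : ℝ => Real.cos (t * s)) (μ φ₀) := by
    apply Integrable.mono' (integrable_const (1:ℝ)) hcos_cont.aestronglyMeasurable
    filter_upwards with s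
    rw [Real.norm_eq_abs]
    exact Real.abs_cos_le_one _
  have hcosI2 : Integrable (fun s : ℝ => 2 - 2 * Real.cos (t * s)) (μ φ₀) :=
    (integrable_const (2:ℝ)).sub (hcosI.const_mul 2)
  have h_int_eq : ∫ s, (2 - 2 * Real.cos (t * s)) ∂(μ φ₀) = 2 - 2 * r := by
    rw [integral_sub (integrable_const 2) (hcosI.const_mul 2), integral_const,
      integral_const_mul, ← hre]
    simp
  have hg2pos : (0:ℝ) < gC α ^ 2 := pow_pos (gC_pos hα0 hα1) 2
  have hmain : 2 - 2 * r ≤ gC α ^ 2 * (t * En) ^ (2*α) := by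
    have hnn : 0 ≤ᵐ[μ φ₀] fun s => 2 - 2 * Real.cos (t * s) :=
      ae_of_all _ fun s => by
        simpa using (by nlinarith [Real.cos_le_one (t * s)] :
          (0:ℝ) ≤ 2 - 2 * Real.cos (t * s))
    have e1 : ENNReal.ofReal (2 - 2*r)
        = ∫⁻ s, ENNReal.ofReal (2 - 2*Real.cos (t*s)) ∂(μ φ₀) := by
      rw [← h_int_eq]
      exact ofReal_integral_eq_lintegral_ofReal hcosI2 hnn
    have e2 : (∫⁻ s, ENNReal.ofReal (2 - 2*Real.cos (t*s)) ∂(μ φ₀))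
        ≤ ∫⁻ s, ENNReal.ofReal (gC α^2 * t^(2*α)) * ENNReal.ofReal (|s|^(2*α)) ∂(μ φ₀) := by
      apply lintegral_mono fun s => ?_
      rw [← ENNReal.ofReal_mul (by positivity)]
      apply ENNReal.ofReal_le_ofReal
      calc 2 - 2*Real.cos (t*s) ≤ (2:ℝ)^(2-2*α) * |t*s|^(2*α) := two_sub_cos_le hα0 hα1 _
        _ ≤ gC α^2 * |t*s|^(2*α) :=
            mul_le_mul_of_nonneg_right (gC_sq_ge hα0 hα1) (by positivity)
        _ = gC α^2 * t^(2*α) * |s|^(2*α) := by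
            rw [abs_mul, abs_of_nonneg ht, Real.mul_rpow ht (abs_nonneg s), mul_assoc]
    have e3 : (∫⁻ s, ENNReal.ofReal (gC α^2 * t^(2*α)) * ENNReal.ofReal (|s|^(2*α)) ∂(μ φ₀))
        = ENNReal.ofReal (gC α^2 * t^(2*α)) * specMoment μ (2*α) φ₀ := by
      rw [specMoment]
      exact lintegral_const_mul _
        (((Real.continuous_rpow_const (by positivity)).comp continuous_abs).measurable.ennreal_ofReal)
    have e4 : ENNReal.ofReal (gC α^2 * t^(2*α)) * specMoment μ (2*α) φ₀
        ≤ ENNReal.ofReal (gC α^2 * t^(2*α)) * ENNReal.ofReal (En^(2*α)) :=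
      mul_le_mul_right hφ₀E _
    have e5 : ENNReal.ofReal (gC α^2 * t^(2*α)) * ENNReal.ofReal (En^(2*α))
        = ENNReal.ofReal (gC α^2 * (t*En)^(2*α)) := by
      rw [← ENNReal.ofReal_mul (by positivity), Real.mul_rpow ht hEnpos.le, mul_assoc]
    have hchain : ENNReal.ofReal (2 - 2*r) ≤ ENNReal.ofReal (gC α^2 * (t*En)^(2*α)) := by
      rw [e1, ← e5]
      exact le_trans e2 (le_trans (le_of_eq e3) e4)
    exact (ENNReal.ofReal_le_ofReal_iff (by positivity)).1 hchain
  have hcosθ : Real.cos θ = r := by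
    rw [hθ]
    exact Real.cos_arccos (abs_le.1 hr_le).1 (abs_le.1 hr_le).2
  have htEn : ((2 - 2*Real.cos θ) / gC α ^ 2) ^ (1/(2*α)) ≤ t * En := by
    have h0 : 0 ≤ 2 - 2*Real.cos θ := by
      rw [hcosθ]; linarith [(abs_le.1 hr_le).2]
    have hdiv : (2 - 2*Real.cos θ) / gC α ^ 2 ≤ (t*En)^(2*α) := by
      rw [div_le_iff₀ hg2pos, hcosθ]
      calc 2 - 2*r ≤ gC α ^ 2 * (t*En)^(2*α) := hmain
        _ = (t*En)^(2*α) * gC α ^ 2 := by ring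
    calc ((2 - 2*Real.cos θ) / gC α ^ 2) ^ (1/(2*α))
        ≤ ((t*En)^(2*α)) ^ (1/(2*α)) :=
          Real.rpow_le_rpow (by positivity) hdiv (by positivity)
      _ = (t*En) ^ ((2*α) * (1/(2*α))) := by
          rw [← Real.rpow_mul (by positivity)]
      _ = t*En := by
          rw [show (2*α) * (1/(2*α)) = 1 by field_simp, Real.rpow_one]
  have part1 : t ≥ ((2 - 2 * Real.cos θ) / gC α ^ 2) ^ (1 / (2 * α)) * (1 / En) := by
    rw [ge_iff_le]
    calc ((2 - 2 * Real.cos θ) / gC α ^ 2) ^ (1 / (2 * α)) * (1 / En)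
        ≤ (t * En) * (1 / En) :=
          mul_le_mul_of_nonneg_right htEn (by positivity)
      _ = t := by field_simp
  refine ⟨part1, fun hhalf => ?_⟩
  subst hhalf
  rw [gC_half] at part1
  have heq : ((2 - 2 * Real.cos θ) / (2:ℝ) ^ 2) ^ (1 / (2 * (1/2 : ℝ)))
      = (1 - Real.cos θ) / 2 := by
    rw [show (1 / (2 * (1/2 : ℝ))) = 1 by norm_num, Real.rpow_one]
    ring
  rw [heq] at part1
  exact part1

end
end

section
/- Let H be a self-adjoint operator on a separable complex Hilbert space ℋ and α ∈ (0,1]. Then every x ∈ D(|H|^α) belongs to the Favard space F_α of the unitary one-parameter group T_t^S := e^{-itH}, and |x|_{F_α}² ≤ g_α² ‖|H|^α x‖², i.e. ‖e^{-itH}x − x‖ ≤ g_α ‖|H|^α x‖ t^α for all t > 0. -/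
open scoped ENNReal NNReal
open MeasureTheory

noncomputable section

local notation "⟪" x ", " y "⟫" => @inner ℂ _ _ x y

/-- Key pointwise inequality: `2 - 2 cos u ≤ 4^{1-α} |u|^{2α}`. -/
lemma key_pointwise {α : ℝ} (h0 : 0 < α) (h1 : α ≤ 1) (u : ℝ) :
    2 - 2 * Real.cos u ≤ 4 ^ ((1:ℝ) - α) * |u| ^ (2 * α) := by
  have h4 : (0:ℝ) < 4 ^ ((1:ℝ)-α) := Real.rpow_pos_of_pos (by norm_num) _
  have h42 : (4:ℝ) ^ ((1:ℝ)-α) = 2 ^ (2*((1:ℝ)-α)) := by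
    rw [show (4:ℝ) = 2 ^ (2:ℝ) by
      rw [show (2:ℝ) = ((2:ℕ):ℝ) by norm_num, Real.rpow_natCast]; norm_num,
      ← Real.rpow_mul (by norm_num)]
  rcases eq_or_ne u 0 with rfl | hne
  · simp [Real.zero_rpow (by positivity : 2*α ≠ 0)]
  have habs : 0 < |u| := abs_pos.2 hne
  rcases le_or_gt (|u|) 2 with hu | hu
  · have hq : 2 - 2 * Real.cos u ≤ u ^ 2 := by
      have := Real.one_sub_sq_div_two_le_cos (x := u); linarith
    have hsplit : u ^ 2 = |u| ^ (2*α) * |u| ^ (2*((1:ℝ)-α)) := by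
      rw [← Real.rpow_add habs, show 2*α+2*((1:ℝ)-α) = ((2:ℕ):ℝ) by push_cast; ring,
        Real.rpow_natCast, sq_abs]
    have hb : |u| ^ (2*((1:ℝ)-α)) ≤ (2:ℝ) ^ (2*((1:ℝ)-α)) :=
      Real.rpow_le_rpow (abs_nonneg u) hu (by linarith)
    calc 2 - 2 * Real.cos u ≤ u ^ 2 := hq
      _ = |u| ^ (2*α) * |u| ^ (2*((1:ℝ)-α)) := hsplit
      _ ≤ |u| ^ (2*α) * (2:ℝ) ^ (2*((1:ℝ)-α)) := by
          exact mul_le_mul_of_nonneg_left hb (Real.rpow_nonneg (abs_nonneg u) _)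
      _ = 4 ^ ((1:ℝ)-α) * |u| ^ (2*α) := by rw [h42]; ring
  · have hcos : 2 - 2 * Real.cos u ≤ 4 := by nlinarith [Real.neg_one_le_cos u]
    have hb : (2:ℝ) ^ (2*α) ≤ |u| ^ (2*α) :=
      Real.rpow_le_rpow (by norm_num) hu.le (by positivity)
    have h4a : (4:ℝ) ^ ((1:ℝ)-α) * 2 ^ (2*α) = 4 := by
      rw [h42, ← Real.rpow_add (by norm_num : (0:ℝ) < 2),
        show 2*((1:ℝ)-α)+2*α = ((2:ℕ):ℝ) by push_cast; ring, Real.rpow_natCast]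
      norm_num
    calc 2 - 2 * Real.cos u ≤ 4 := hcos
      _ = 4 ^ ((1:ℝ)-α) * 2 ^ (2*α) := h4a.symm
      _ ≤ 4 ^ ((1:ℝ)-α) * |u| ^ (2*α) := mul_le_mul_of_nonneg_left hb h4.le

/-- Lower bound for the constant: `2^{1-α} ≤ g_α`. -/
lemma gC_ge {α : ℝ} (h0 : 0 < α) (h1 : α ≤ 1) : (2:ℝ) ^ ((1:ℝ) - α) ≤ gC α := by
  rcases eq_or_lt_of_le h1 with rfl | h1'
  · simp [gC, zetaC]
  · have hb : (0:ℝ) < 1 - α := by linarith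
    have hc : (0:ℝ) < 2 * α / (1 - α) := by positivity
    rw [gC, zetaC, if_neg h1'.ne]
    have e1 : (2 * α / (1 - α)) ^ ((1:ℝ) - α)
        = (2 * α / (1 - α)) * (2 * α / (1 - α)) ^ (-α) := by
      rw [Real.rpow_sub hc, Real.rpow_one, div_eq_mul_inv, ← Real.rpow_neg hc.le]
    rw [e1]
    have hsum : (2 * α / (1 - α) * (2 * α / (1 - α)) ^ (-α) + 2 * (2 * α / (1 - α)) ^ (-α))
        = (2 / (1 - α)) * (2 * α / (1 - α)) ^ (-α) := by
      field_simp; ring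
    rw [hsum]
    have hL : (0:ℝ) < (2 / (1 - α)) * (2 * α / (1 - α)) ^ (-α)
        * (1 - α) ^ ((1 - α)/2) * α ^ (α/2) := by positivity
    have hR : (0:ℝ) < (2:ℝ) ^ ((1:ℝ) - α) := by positivity
    rw [← Real.exp_log hL, ← Real.exp_log hR, Real.exp_le_exp]
    rw [Real.log_rpow (by norm_num), Real.log_mul (by positivity) (by positivity),
      Real.log_mul (by positivity) (by positivity),
      Real.log_mul (by positivity) (by positivity),
      Real.log_div (by norm_num) (by positivity),
      Real.log_rpow hc, Real.log_rpow hb, Real.log_rpow h0,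
      Real.log_div (by positivity) (by positivity),
      Real.log_mul (by norm_num) (by positivity)]
    nlinarith [mul_nonneg h0.le (neg_nonneg.2 (Real.log_nonpos h0.le h1)),
      mul_nonneg hb.le (neg_nonneg.2 (Real.log_nonpos hb.le (by linarith)))]

lemma gC_pos_s11 {α : ℝ} (h0 : 0 < α) (h1 : α ≤ 1) : 0 < gC α :=
  lt_of_lt_of_le (by positivity) (gC_ge h0 h1)

/-- Favard spaces of unitary groups.  `H` self-adjoint on a separable
complex Hilbert space (encoded by its unitary group `T t = e^{-itH}` and spectral measure
family `μ`), `α ∈ (0,1]`, `A = |H|^α`.  Every `x ∈ D(|H|^α)` belongs to the Favard space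
`F_α` of `(T_t)` with `|x|_{F_α} ≤ g_α ‖|H|^α x‖`, i.e.
`‖e^{-itH}x − x‖ ≤ g_α ‖|H|^α x‖ t^α` for all `t > 0`. -/
theorem statement11
    {ℋ : Type*} [NormedAddCommGroup ℋ] [InnerProductSpace ℂ ℋ] [CompleteSpace ℋ]
    [TopologicalSpace.SeparableSpace ℋ]
    (H : ℋ →ₗ.[ℂ] ℋ) (hHsa : IsSelfAdjoint H)
    (μ : ℋ → Measure ℝ)
    (hμtot : ∀ x : ℋ, μ x Set.univ = ENNReal.ofReal (‖x‖ ^ 2))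
    (hHdom : ∀ x : ℋ, x ∈ H.domain ↔ specMoment μ 2 x ≠ ∞)
    (hHval : ∀ x : H.domain, ⟪(x : ℋ), H x⟫ = ∫ s, (s : ℂ) ∂(μ x))
    (T : ℝ → ℋ →L[ℂ] ℋ)
    (hT0 : T 0 = ContinuousLinearMap.id ℂ ℋ)
    (hTadd : ∀ t s : ℝ, (T t).comp (T s) = T (t + s))
    (hTiso : ∀ (t : ℝ) (x : ℋ), ‖T t x‖ = ‖x‖)
    (hμT : ∀ (x : ℋ) (t : ℝ), ⟪x, T t x⟫ = ∫ s, Complex.exp (-(Complex.I * t * s)) ∂(μ x))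
    (α : ℝ) (hα : α ∈ Set.Ioc (0 : ℝ) 1)
    (A : ℋ →ₗ.[ℂ] ℋ)
    (hAdom : ∀ x : ℋ, x ∈ A.domain ↔ specMoment μ (2 * α) x ≠ ∞)
    (hAval : ∀ x : A.domain, ENNReal.ofReal (‖A x‖ ^ 2) = specMoment μ (2 * α) (x : ℋ))
    (x : ℋ) (hx : x ∈ A.domain) :
    ∀ t : ℝ, 0 < t → ‖T t x - x‖ ≤ gC α * ‖A ⟨x, hx⟩‖ * t ^ α := by
  intro t ht
  obtain ⟨hα0, hα1⟩ := hα
  haveI : IsFiniteMeasure (μ x) := ⟨by rw [hμtot]; exact ENNReal.ofReal_lt_top⟩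
  set nA : ℝ := ‖A ⟨x, hx⟩‖ with hnA
  have hA2 : ENNReal.ofReal (nA ^ 2) = specMoment μ (2 * α) x := hAval ⟨x, hx⟩
  -- Step 1: integrability
  have hcont : Continuous fun s : ℝ => Complex.exp (-(Complex.I * t * s)) := by fun_prop
  have hint : Integrable (fun s : ℝ => Complex.exp (-(Complex.I * t * s))) (μ x) := by
    refine Integrable.mono' (integrable_const 1) hcont.aestronglyMeasurable
      (Filter.Eventually.of_forall fun s => ?_)
    rw [Complex.norm_exp]
    have : (-(Complex.I * t * s)).re = 0 := by simp
    rw [this, Real.exp_zero]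
  -- Step 2: real part of the inner product
  have hre : (⟪x, T t x⟫).re = ∫ s, Real.cos (t * s) ∂(μ x) := by
    have h2 : ∀ s : ℝ, (Complex.exp (-(Complex.I * t * s))).re = Real.cos (t * s) := by
      intro s
      rw [show -(Complex.I * (t:ℂ) * (s:ℂ)) = ((-(t*s) : ℝ) : ℂ) * Complex.I by
        push_cast; ring, Complex.exp_ofReal_mul_I_re, Real.cos_neg]
    calc (⟪x, T t x⟫).re
        = RCLike.re (∫ s, Complex.exp (-(Complex.I * t * s)) ∂(μ x)) := by
          rw [hμT x t]; simp [RCLike.re_to_complex]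
      _ = ∫ s, RCLike.re (Complex.exp (-(Complex.I * t * s))) ∂(μ x) := (integral_re hint).symm
      _ = ∫ s, Real.cos (t * s) ∂(μ x) := by
          refine integral_congr_ae (Filter.Eventually.of_forall fun s => ?_)
          simpa [RCLike.re_to_complex] using h2 s
  -- Step 3: norm identity
  have hns : ‖T t x - x‖ ^ 2 = 2 * ‖x‖ ^ 2 - 2 * (⟪x, T t x⟫).re := by
    have h := @norm_sub_sq ℂ ℋ _ _ _ (T t x) x
    have hsym := @inner_re_symm ℂ ℋ _ _ _ (T t x) x
    simp only [RCLike.re_to_complex] at h hsym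
    rw [hTiso] at h
    rw [h, hsym]; ring
  have hμreal : (μ x Set.univ).toReal = ‖x‖ ^ 2 := by
    rw [hμtot, ENNReal.toReal_ofReal (by positivity)]
  have hcc : Continuous fun s : ℝ => Real.cos (t * s) :=
    Real.continuous_cos.comp (continuous_const.mul continuous_id)
  have hcosint : Integrable (fun s : ℝ => Real.cos (t * s)) (μ x) := by
    refine Integrable.mono' (integrable_const 1) hcc.aestronglyMeasurable
      (Filter.Eventually.of_forall fun s => ?_)
    rw [Real.norm_eq_abs]; exact Real.abs_cos_le_one _
  have hkey : ‖T t x - x‖ ^ 2 = ∫ s, (2 - 2 * Real.cos (t * s)) ∂(μ x) := by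
    rw [hns, hre, integral_sub (integrable_const 2) (hcosint.const_mul 2),
      integral_const, smul_eq_mul, measureReal_def, hμreal, integral_const_mul]
    ring
  -- Step 4: pointwise bound and lintegral comparison
  have hnn : ∀ s : ℝ, 0 ≤ 2 - 2 * Real.cos (t * s) := fun s => by
    nlinarith [Real.cos_le_one (t * s)]
  have hbound : ∀ s : ℝ,
      2 - 2 * Real.cos (t * s) ≤ (4 ^ ((1:ℝ)-α) * t ^ (2*α)) * |s| ^ (2*α) := by
    intro s
    have h := key_pointwise hα0 hα1 (t * s)
    have habs : |t * s| ^ (2*α) = t ^ (2*α) * |s| ^ (2*α) := by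
      rw [abs_mul, abs_of_pos ht, Real.mul_rpow ht.le (abs_nonneg s)]
    rw [habs] at h
    calc 2 - 2 * Real.cos (t * s) ≤ 4 ^ ((1:ℝ)-α) * (t ^ (2*α) * |s| ^ (2*α)) := h
      _ = (4 ^ ((1:ℝ)-α) * t ^ (2*α)) * |s| ^ (2*α) := by ring
  have hfin : ENNReal.ofReal (4 ^ ((1:ℝ)-α) * t ^ (2*α)) * specMoment μ (2*α) x ≠ ∞ := by
    rw [← hA2]
    exact ENNReal.mul_ne_top ENNReal.ofReal_ne_top ENNReal.ofReal_ne_top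
  have hL : ∫⁻ s, ENNReal.ofReal (2 - 2 * Real.cos (t * s)) ∂(μ x)
      ≤ ENNReal.ofReal (4 ^ ((1:ℝ)-α) * t ^ (2*α)) * specMoment μ (2*α) x := by
    rw [specMoment, ← lintegral_const_mul' _ _ ENNReal.ofReal_ne_top]
    refine lintegral_mono fun s => ?_
    rw [← ENNReal.ofReal_mul (by positivity)]
    exact ENNReal.ofReal_le_ofReal (hbound s)
  have hsq : ‖T t x - x‖ ^ 2 ≤ (4 ^ ((1:ℝ)-α) * t ^ (2*α)) * nA ^ 2 := by
    have h1 : ‖T t x - x‖ ^ 2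
        = (∫⁻ s, ENNReal.ofReal (2 - 2 * Real.cos (t * s)) ∂(μ x)).toReal := by
      rw [hkey, integral_eq_lintegral_of_nonneg_ae (Filter.Eventually.of_forall hnn)
        ((continuous_const.sub (continuous_const.mul hcc)).aestronglyMeasurable)]
    rw [h1]
    have h2 := ENNReal.toReal_mono hfin hL
    rwa [← hA2, ← ENNReal.ofReal_mul (by positivity),
      ENNReal.toReal_ofReal (by positivity)] at h2
  -- Step 5: constant comparison and conclusion
  have hg : (2:ℝ) ^ ((1:ℝ)-α) ≤ gC α := gC_ge hα0 hα1
  have hgpos := gC_pos_s11 hα0 hα1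
  have h4g : (4:ℝ) ^ ((1:ℝ)-α) ≤ gC α ^ 2 := by
    have h42 : (4:ℝ) ^ ((1:ℝ)-α) = ((2:ℝ) ^ ((1:ℝ)-α)) ^ 2 := by
      rw [← Real.rpow_natCast ((2:ℝ)^((1:ℝ)-α)) 2, ← Real.rpow_mul (by norm_num),
        show ((1:ℝ)-α) * ((2:ℕ):ℝ) = 2*((1:ℝ)-α) by push_cast; ring,
        show (4:ℝ) = 2 ^ (2:ℝ) by
          rw [show (2:ℝ) = ((2:ℕ):ℝ) by norm_num, Real.rpow_natCast]; norm_num,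
        ← Real.rpow_mul (by norm_num)]
    rw [h42]
    exact pow_le_pow_left₀ (by positivity) hg 2
  have hexp : (t ^ α) ^ 2 = t ^ (2*α) := by
    rw [← Real.rpow_natCast (t ^ α) 2, ← Real.rpow_mul ht.le,
      show α * ((2:ℕ):ℝ) = 2*α by push_cast; ring]
  have hfinal : ‖T t x - x‖ ^ 2 ≤ (gC α * nA * t ^ α) ^ 2 := by
    calc ‖T t x - x‖ ^ 2 ≤ (4 ^ ((1:ℝ)-α) * t ^ (2*α)) * nA ^ 2 := hsq
      _ ≤ (gC α ^ 2 * t ^ (2*α)) * nA ^ 2 := by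
          have ht2 : (0:ℝ) ≤ t ^ (2*α) := Real.rpow_nonneg ht.le _
          exact mul_le_mul_of_nonneg_right
            (mul_le_mul_of_nonneg_right h4g ht2) (sq_nonneg nA)
      _ = (gC α * nA * t ^ α) ^ 2 := by rw [mul_pow, mul_pow, hexp]; ring
  have hrhs : (0:ℝ) ≤ gC α * nA * t ^ α :=
    mul_nonneg (mul_nonneg hgpos.le (norm_nonneg _)) (Real.rpow_nonneg ht.le α)
  calc ‖T t x - x‖ = Real.sqrt (‖T t x - x‖ ^ 2) := (Real.sqrt_sq (norm_nonneg _)).symm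
    _ ≤ Real.sqrt ((gC α * nA * t ^ α) ^ 2) := Real.sqrt_le_sqrt hfinal
    _ = gC α * nA * t ^ α := Real.sqrt_sq hrhs

end
end
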